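/- arXiv:2401.16636 — 2 statements merged into one kernel-verified Lean document; each statement's English description precedes it below -/
import Mathlib

section
/- For every element g of PSL(2,ℤ) acting on ℍ, every t > 0, and every rational cusp r ∈ ℚ ∪ {∞} with g(r) = r', the image g(B_t(r)) equals B_t(r'), where B_t(p/q) = H_{t/q²}(p/q) for p/q in lowest terms and B_t(∞) = {τ : Im τ > 1/t}. -/
open Complex

/-- The normalized horoball `B_t(p/q)` based at the cusp `p/q` (with `(p,q) = (1,0)`
representing `∞`): note `Im τ / |qτ - p|² > 1/t` gives `H_{t/q²}(p/q)` for `q > 0`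
and the half-plane `{Im τ > 1/t}` for `(p,q) = (±1,0)`. -/
def cuspHoroball (t : ℝ) (p q : ℤ) : Set ℂ :=
  {τ : ℂ | 0 < τ.im ∧ τ.im / ‖(q : ℂ) * τ - (p : ℂ)‖^2 > 1 / t}

lemma denom_ne (a b c d : ℤ) (hdet : a * d - b * c = 1) {τ : ℂ} (hτ : 0 < τ.im) :
    (c : ℂ) * τ + d ≠ 0 := by
  intro h
  have hi := congrArg Complex.im h
  have hr := congrArg Complex.re h
  simp [Complex.add_im, Complex.mul_im, Complex.add_re, Complex.mul_re] at hi hr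
  have hc' : c = 0 := by
    rcases hi with h' | h'
    · exact_mod_cast h'
    · linarith
  have hc : (c : ℝ) = 0 := by exact_mod_cast hc'
  rw [hc] at hr
  have hd' : d = 0 := by
    have : (d : ℝ) = 0 := by linarith
    exact_mod_cast this
  subst hc'; subst hd'; simp at hdet

lemma horoball_map (a b c d : ℤ) (hdet : a * d - b * c = 1) (t : ℝ) (p q : ℤ)
    {τ : ℂ} (hτ : τ ∈ cuspHoroball t p q) :
    ((a : ℂ) * τ + b) / ((c : ℂ) * τ + d) ∈ cuspHoroball t (a * p + b * q) (c * p + d * q) := by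
  obtain ⟨h1, h2⟩ := hτ
  have hDne : (c : ℂ) * τ + d ≠ 0 := denom_ne a b c d hdet h1
  have hS : 0 < Complex.normSq ((c : ℂ) * τ + d) := Complex.normSq_pos.2 hDne
  have hdetR : (a : ℝ) * d - b * c = 1 := by exact_mod_cast hdet
  have hdetC : (a : ℂ) * d - b * c = 1 := by exact_mod_cast hdet
  have him : (((a : ℂ) * τ + b) / ((c : ℂ) * τ + d)).im
      = τ.im / Complex.normSq ((c : ℂ) * τ + d) := by
    rw [Complex.div_im]
    simp only [Complex.add_im, Complex.add_re, Complex.mul_im, Complex.mul_re,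
      Complex.intCast_im, Complex.intCast_re]
    field_simp
    ring_nf
    linear_combination τ.im * hdetR
  have hnum : ((c * p + d * q : ℤ) : ℂ) * (((a : ℂ) * τ + b) / ((c : ℂ) * τ + d))
      - ((a * p + b * q : ℤ) : ℂ) = ((q : ℂ) * τ - p) / ((c : ℂ) * τ + d) := by
    have key : (((a : ℂ) * τ + b) / ((c : ℂ) * τ + d)) * ((c : ℂ) * τ + d) = (a : ℂ) * τ + b :=
      div_mul_cancel₀ _ hDne
    rw [eq_div_iff hDne]
    push_cast
    linear_combination ((q : ℂ) * τ - p) * hdetC + ((c : ℂ) * p + d * q) * key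
  constructor
  · rw [him]; positivity
  · show _ < _
    rw [him]
    rw [hnum, norm_div, div_pow, Complex.sq_norm ((c:ℂ)*τ+d)]
    rw [div_div_div_cancel_right₀ (ne_of_gt hS)]
    exact h2

/-- An element of PSL(2,ℤ) sends `B_t(r)` onto `B_t(r')` where `r' = g(r)`:
for `g = [[a,b],[c,d]]` and `r = p/q` in lowest terms, `g(r) = (ap+bq)/(cp+dq)`. -/
theorem stmt_5 (a b c d : ℤ) (hdet : a * d - b * c = 1) (t : ℝ) (ht : 0 < t)
    (p q : ℤ) (hq : 0 < q ∨ (p = 1 ∧ q = 0)) (hpq : IsCoprime p q) :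
    (fun τ : ℂ => ((a : ℂ) * τ + b) / ((c : ℂ) * τ + d)) '' cuspHoroball t p q =
      cuspHoroball t (a * p + b * q) (c * p + d * q) := by
  ext σ
  constructor
  · rintro ⟨τ, hτ, rfl⟩
    exact horoball_map a b c d hdet t p q hτ
  · intro hσ
    have hσ1 : 0 < σ.im := hσ.1
    have hdet' : d * a - (-b) * (-c) = 1 := by linarith
    have hτmem := horoball_map d (-b) (-c) a hdet' t (a * p + b * q) (c * p + d * q) hσ
    have e1 : d * (a * p + b * q) + (-b) * (c * p + d * q) = p := by linear_combination p * hdet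
    have e2 : (-c) * (a * p + b * q) + a * (c * p + d * q) = q := by linear_combination q * hdet
    rw [e1, e2] at hτmem
    set τ : ℂ := ((d : ℂ) * σ + (-b : ℤ)) / ((-c : ℤ) * σ + a) with hτdef
    refine ⟨τ, hτmem, ?_⟩
    have h2 : ((-c : ℤ) : ℂ) * σ + a ≠ 0 := denom_ne d (-b) (-c) a hdet' hσ1
    have h1 : (c : ℂ) * τ + d ≠ 0 := denom_ne a b c d hdet hτmem.1
    have hdetC : (a : ℂ) * d - b * c = 1 := by exact_mod_cast hdet
    show ((a : ℂ) * τ + b) / ((c : ℂ) * τ + d) = σ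
    push_cast at h2
    have hA : (a : ℂ) * τ + b = σ / (-(c : ℂ) * σ + a) := by
      rw [hτdef]; push_cast; rw [mul_div_assoc', div_add' _ _ _ h2, div_eq_div_iff h2 h2]
      linear_combination σ * (-(c : ℂ) * σ + a) * hdetC
    have hB : (c : ℂ) * τ + d = 1 / (-(c : ℂ) * σ + a) := by
      rw [hτdef]; push_cast; rw [mul_div_assoc', div_add' _ _ _ h2, div_eq_div_iff h2 h2]
      linear_combination (-(c : ℂ) * σ + a) * hdetC
    rw [hA, hB, div_div_div_cancel_right₀ h2, div_one]
end

section
/- Any pairwise disjoint collection of nonempty open horoballs in the hyperbolic plane is locally finite: every compact subset of the hyperbolic plane meets only finitely many of them. -/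
/-- A pairwise disjoint family of nonempty open horoballs in the Poincaré disk
(open Euclidean disks internally tangent to the unit circle) is locally finite:
every compact subset of the disk meets only finitely many of them. -/
theorem stmt_7 {ι : Type*} (c : ι → ℂ) (ρ : ι → ℝ)
    (hρ : ∀ i, 0 < ρ i) (htangent : ∀ i, ‖c i‖ + ρ i = 1)
    (hdisj : Pairwise fun i j => Disjoint (Metric.ball (c i) (ρ i)) (Metric.ball (c j) (ρ j)))
    (K : Set ℂ) (hK : IsCompact K) (hKD : K ⊆ Metric.ball (0 : ℂ) 1) :
    {i : ι | (Metric.ball (c i) (ρ i) ∩ K).Nonempty}.Finite := by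
  rcases K.eq_empty_or_nonempty with rfl | hKne
  · simp
  -- get r < 1 bounding |x| on K
  obtain ⟨x₀, hx₀K, hx₀⟩ := hK.exists_isMaxOn hKne (continuous_norm.continuousOn)
  set r : ℝ := ‖x₀‖ with hr
  have hr1 : r < 1 := by simpa [Complex.dist_eq] using hKD hx₀K
  set ε : ℝ := (1 - r) / 2 with hε
  have hεpos : 0 < ε := by linarith
  have hrnn : 0 ≤ r := norm_nonneg _
  set S := {i : ι | (Metric.ball (c i) (ρ i) ∩ K).Nonempty} with hS
  -- every horoball meeting K has radius > ε
  have hbig : ∀ i ∈ S, ε < ρ i := by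
    intro i hi
    obtain ⟨x, hx, hxK⟩ := hi
    have h1 : ‖x‖ ≤ r := hx₀ hxK
    have h2 : dist x (c i) < ρ i := Metric.mem_ball.mp hx
    have h3 : ‖c i‖ = 1 - ρ i := by linarith [htangent i]
    have h4 : ‖c i‖ - ‖x‖ ≤ dist x (c i) := by
      rw [Complex.dist_eq]
      calc ‖c i‖ - ‖x‖ ≤ ‖c i - x‖ := by
            simpa using norm_sub_norm_le (c i) x
        _ = ‖x - c i‖ := by rw [← norm_neg]; ring_nf
    have : 1 - ρ i - r < ρ i := by linarith
    simp only [hε]; linarith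
  -- centers of horoballs meeting K are 2ε-separated
  have hsep : ∀ i ∈ S, ∀ j ∈ S, i ≠ j → 2 * ε < dist (c i) (c j) := by
    intro i hi j hj hij
    have := (disjoint_ball_ball_iff (hρ i) (hρ j)).mp (hdisj hij)
    have := hbig i hi
    have := hbig j hj
    linarith
  -- the closed unit ball is totally bounded; cover by finitely many ε-balls
  have htb : TotallyBounded (Metric.closedBall (0 : ℂ) 1) :=
    (isCompact_closedBall (0 : ℂ) 1).totallyBounded
  obtain ⟨t, htfin, htcov⟩ := (Metric.totallyBounded_iff.mp htb) ε hεpos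
  have hcmem : ∀ i ∈ S, c i ∈ Metric.closedBall (0 : ℂ) 1 := by
    intro i _
    rw [Metric.mem_closedBall, dist_zero_right]
    have := htangent i
    have := hρ i
    linarith
  -- map each i to a center of a covering ball; this is injective on S
  have hchoice : ∀ i ∈ S, ∃ y ∈ t, c i ∈ Metric.ball y ε := by
    intro i hi
    have := htcov (hcmem i hi)
    simpa using this
  choose! f hf1 hf2 using hchoice
  have hinj : Set.InjOn f S := by
    intro i hi j hj hfij
    by_contra hij
    have h1 : dist (c i) (c j) ≤ dist (c i) (f i) + dist (f j) (c j) := by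
      rw [hfij]; exact dist_triangle _ _ _
    have h2 : dist (c i) (f i) < ε := Metric.mem_ball.mp (hf2 i hi)
    have h3 : dist (f j) (c j) < ε := by
      rw [dist_comm]; exact Metric.mem_ball.mp (hf2 j hj)
    have := hsep i hi j hj hij
    linarith
  exact Set.Finite.of_finite_image ((htfin.subset (Set.image_subset_iff.mpr hf1)))
    hinj
end
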